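/- The derivative A'(y) of A(y) = Σ_{n=1}^∞ n² e^{−n²y}(−4n⁴y² + 15n²y − 15/2) is given by A'(y) = Σ_{n=1}^∞ n⁴ e^{−n²y}(4n⁴y² − 23n²y + 45/2) for y > 0, and A'(y) < 0 for all y ∈ [π, 3.16]. -/

import Mathlib

open Real
lemma exp6_gt : (403:ℝ) < Real.exp 6 := by
  have h := Real.exp_one_gt_d9
  have h6 : Real.exp 6 = Real.exp 1 ^ 6 := by rw [← Real.exp_nat_mul]; norm_num
  have hp : (2.7182818283:ℝ) ^ 6 ≤ Real.exp 1 ^ 6 := by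
    apply pow_le_pow_left₀ (by norm_num) h.le
  rw [h6]
  calc (403:ℝ) < (2.7182818283:ℝ)^6 := by norm_num
    _ ≤ _ := hp

lemma exp316_lt : Real.exp 3.16 < 24 := by
  have h := Real.exp_one_lt_d9
  have h3 : Real.exp 3 = Real.exp 1 ^ 3 := by rw [← Real.exp_nat_mul]; norm_num
  have hsplit : Real.exp (3.16:ℝ) = Real.exp 3 * Real.exp 0.16 := by
    rw [← Real.exp_add]; norm_num
  have h16 : Real.exp (0.16:ℝ) < 25/21 := by
    have h2 := Real.add_one_lt_exp (x := (-0.16:ℝ)) (by norm_num)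
    have hpos := Real.exp_pos (0.16:ℝ)
    rw [Real.exp_neg] at h2
    rw [lt_inv_comm₀ (by norm_num) hpos] at h2
    linarith
  have h3b : Real.exp 3 < 2.7182818286 ^ 3 := by
    rw [h3]; exact pow_lt_pow_left₀ h (Real.exp_pos 1).le (by norm_num)
  rw [hsplit]
  nlinarith [Real.exp_pos (0.16:ℝ), Real.exp_pos (3:ℝ)]
lemma exp_neg6_lt : Real.exp (-6:ℝ) < 1/403 := by
  have hp6 := Real.exp_pos (6:ℝ)
  have hinv6 : (Real.exp 6)⁻¹ * Real.exp 6 = 1 := inv_mul_cancel₀ hp6.ne'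
  rw [Real.exp_neg]
  nlinarith [exp6_gt, inv_pos.2 hp6]

lemma exp_neg12_lt : Real.exp (-12:ℝ) < 1/162409 := by
  have h2 : Real.exp (-12:ℝ) = Real.exp (-6:ℝ)^2 := by
    rw [← Real.exp_nat_mul]; norm_num
  rw [h2]
  nlinarith [exp_neg6_lt, Real.exp_pos (-6:ℝ)]

lemma exp_neg316_gt : 1/24 < Real.exp (-(3.16:ℝ)) := by
  have h24 := exp316_lt
  have hp := Real.exp_pos (3.16:ℝ)
  have hi : (Real.exp 3.16)⁻¹ * Real.exp 3.16 = 1 := inv_mul_cancel₀ hp.ne'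
  rw [Real.exp_neg]
  nlinarith [inv_pos.2 hp]

lemma tailterm (y : ℝ) (k : ℕ) (hy3 : (3:ℝ) ≤ y) (hyr : y ≤ 3.16) (hy0 : 0 < y) :
    ((k:ℝ)+2)^4 * Real.exp (-(((k:ℝ)+2)^2*y))
        * (4*((k:ℝ)+2)^4*y^2 - 23*((k:ℝ)+2)^2*y + 45/2)
      ≤ (4*(3.16:ℝ)^2*256*Real.exp (-12)) * (256*Real.exp (-6))^k := by
  have hknn : (0:ℝ) ≤ (k:ℝ) := Nat.cast_nonneg k
  obtain ⟨M, hM⟩ : ∃ M : ℝ, M = (k:ℝ)+2 := ⟨_, rfl⟩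
  rw [← hM]
  have hM2 : (2:ℝ) ≤ M := by rw [hM]; linarith
  have hM0 : (0:ℝ) < M := by linarith
  have hMpow : M ≤ (2:ℝ)^(k+1) := by
    have hnat : k + 2 ≤ 2^(k+1) := Nat.lt_two_pow_self (n := k+1)
    calc M = ((k+2 : ℕ) : ℝ) := by rw [hM]; push_cast; ring
      _ ≤ ((2^(k+1) : ℕ) : ℝ) := by exact_mod_cast hnat
      _ = (2:ℝ)^(k+1) := by push_cast; ring
  have hQ : 4*M^4*y^2 - 23*M^2*y + 45/2 ≤ 4*M^4*y^2 := by
    have h4 : (4:ℝ) ≤ M^2 := by nlinarith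
    have hmm := mul_le_mul h4 hy3 (by norm_num : (0:ℝ) ≤ 3) (by positivity : (0:ℝ) ≤ M^2)
    nlinarith [hmm]
  have hE : Real.exp (-(M^2*y)) ≤ Real.exp (-12) * Real.exp (-6)^k := by
    have h1 : -(M^2*y) ≤ (k:ℝ)*(-6) + (-12) := by
      have h6M : (6:ℝ)*M ≤ M^2*y := by
        nlinarith [mul_nonneg (mul_nonneg hM0.le hM0.le) (sub_nonneg.2 hy3),
          mul_nonneg (mul_nonneg (by norm_num : (0:ℝ) ≤ 3) hM0.le) (sub_nonneg.2 hM2)]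
      linarith [hM]
    calc Real.exp (-(M^2*y)) ≤ Real.exp ((k:ℝ)*(-6) + (-12)) := Real.exp_le_exp.2 h1
      _ = Real.exp (-12) * Real.exp (-6)^k := by
          rw [Real.exp_add, Real.exp_nat_mul]; ring
  have hM8 : M^8 ≤ 256*256^k := by
    calc M^8 ≤ ((2:ℝ)^(k+1))^8 := pow_le_pow_left₀ hM0.le hMpow 8
      _ = ((2:ℝ)^8)^(k+1) := by rw [← pow_mul, ← pow_mul]; ring_nf
      _ = 256*256^k := by norm_num [pow_succ]; ring
  have hy2 : y^2 ≤ (3.16:ℝ)^2 := by nlinarith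
  calc M^4 * Real.exp (-(M^2*y)) * (4*M^4*y^2 - 23*M^2*y + 45/2)
      ≤ M^4 * Real.exp (-(M^2*y)) * (4*M^4*y^2) :=
        mul_le_mul_of_nonneg_left hQ (by positivity)
    _ = 4*y^2*(M^8 * Real.exp (-(M^2*y))) := by ring
    _ ≤ 4*(3.16:ℝ)^2*((256*256^k) * (Real.exp (-12) * Real.exp (-6)^k)) := by
        apply mul_le_mul
        · nlinarith
        · exact mul_le_mul hM8 hE (Real.exp_pos _).le (by positivity)
        · positivity
        · positivity
    _ = (4*(3.16:ℝ)^2*256*Real.exp (-12)) * (256*Real.exp (-6))^k := by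
        rw [mul_pow]; ring


lemma pnat_one_le (n : ℕ+) : (1:ℝ) ≤ (n:ℝ) := by exact_mod_cast n.one_le

lemma summable_nat_aux (c : ℝ) (hc : 0 < c) :
    Summable (fun n : ℕ => (n:ℝ)^8 * Real.exp (-(c * n))) := by
  have hr : ‖Real.exp (-c)‖ < 1 := by
    rw [Real.norm_eq_abs, abs_of_pos (Real.exp_pos _), Real.exp_lt_one_iff]
    linarith
  have h := summable_pow_mul_geometric_of_norm_lt_one 8 hr (R := ℝ)
  have he : ∀ n : ℕ, Real.exp (-(c * n)) = Real.exp (-c) ^ n := by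
    intro n; rw [← Real.exp_nat_mul]; ring_nf
  simpa [he] using h

lemma summable_pnat_aux (c : ℝ) (hc : 0 < c) :
    Summable (fun n : ℕ+ => (n:ℝ)^8 * Real.exp (-(c * n))) := by
  have h := (summable_nat_aux c hc).comp_injective PNat.coe_injective
  exact h

lemma hterm (n : ℕ+) (x : ℝ) :
    HasDerivAt (fun z => (n:ℝ)^2 * Real.exp (-((n:ℝ)^2*z)) * (-4*(n:ℝ)^4*z^2+15*(n:ℝ)^2*z-15/2))
      ((n:ℝ)^4 * Real.exp (-((n:ℝ)^2*x)) * (4*(n:ℝ)^4*x^2-23*(n:ℝ)^2*x+45/2)) x := by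
  set N := (n:ℝ) with hNdef
  have h1 : HasDerivAt (fun z:ℝ => -(N^2*z)) (-(N^2)) x := by
    have := ((hasDerivAt_id x).const_mul (N^2)).neg
    simp only [mul_one] at this
    exact this
  have h2 := h1.exp
  have h3 : HasDerivAt (fun z:ℝ => -4*N^4*z^2+15*N^2*z-15/2) (-4*N^4*(2*x)+15*N^2) x := by
    have ha := (hasDerivAt_pow 2 x).const_mul (-4*N^4)
    have hb := (hasDerivAt_id x).const_mul (15*N^2)
    have hc := (ha.add hb).sub_const (15/2)
    have hfun : (fun z:ℝ => -4*N^4*z^2+15*N^2*z-15/2)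
        = fun z:ℝ => -4*N^4*z^2 + 15*N^2*id z - 15/2 := by funext z; simp
    rw [hfun]
    exact hc.congr_deriv (by norm_num)
  have h4 := (h2.mul h3).const_mul (N^2)
  have hfun : (fun z => N^2 * Real.exp (-(N^2*z)) * (-4*N^4*z^2+15*N^2*z-15/2))
      = fun z => N^2 * (Real.exp (-(N^2*z)) * (-4*N^4*z^2+15*N^2*z-15/2)) := by
    funext z; ring
  rw [hfun]
  have hd : N^4 * Real.exp (-(N^2*x)) * (4*N^4*x^2-23*N^2*x+45/2)
      = N^2 * (Real.exp (-(N^2*x)) * -N^2 * (-4*N^4*x^2+15*N^2*x-15/2)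
        + Real.exp (-(N^2*x)) * (-4*N^4*(2*x)+15*N^2)) := by ring
  rw [hd]
  exact h4

lemma bound1 (y x N : ℝ) (hy : 0 < y) (hN : 1 ≤ N) (hx1 : y/2 ≤ x) (hx2 : x ≤ y + 1) :
    ‖N^2 * Real.exp (-(N^2*x)) * (-4*N^4*x^2+15*N^2*x-15/2)‖
      ≤ 30*(y+1)^2 * (N^8 * Real.exp (-(y/2 * N))) := by
  have hx0 : 0 < x := lt_of_lt_of_le (half_pos hy) hx1
  have hN0 : (0:ℝ) < N := lt_of_lt_of_le one_pos hN
  have hN2 : (1:ℝ) ≤ N^2 := one_le_pow₀ hN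
  have hN4 : (1:ℝ) ≤ N^4 := one_le_pow₀ hN
  have hE : Real.exp (-(N^2*x)) ≤ Real.exp (-(y/2 * N)) := by
    apply Real.exp_le_exp.2
    nlinarith [mul_nonneg (mul_nonneg (sub_nonneg.2 hN) hN0.le) hy.le,
      mul_nonneg (mul_nonneg hN0.le hN0.le) (sub_nonneg.2 hx1)]
  have hyy : (1:ℝ) ≤ (y+1)^2 := by nlinarith
  have hxx : x^2 ≤ (y+1)^2 := by nlinarith
  have hP : |(-4*N^4*x^2+15*N^2*x-15/2 : ℝ)| ≤ 27*N^4*(y+1)^2 := by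
    rw [abs_le]
    constructor
    · have hone : (1:ℝ) ≤ N^4*(y+1)^2 := by nlinarith
      nlinarith [mul_le_mul_of_nonneg_left hxx (by positivity : (0:ℝ) ≤ 4*N^4),
        mul_nonneg (mul_nonneg (by norm_num : (0:ℝ) ≤ 15) (le_trans zero_le_one hN2)) hx0.le]
    · have hB : y + 1 ≤ (y+1)^2 := by nlinarith
      have hN24 : N^2 ≤ N^4 := pow_le_pow_right₀ hN (by norm_num)
      nlinarith [mul_le_mul_of_nonneg_left hx2 (by positivity : (0:ℝ) ≤ N^2),
        mul_le_mul_of_nonneg_left hB (by positivity : (0:ℝ) ≤ N^2),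
        mul_le_mul_of_nonneg_right hN24 (sq_nonneg (y+1)),
        mul_nonneg (by positivity : (0:ℝ) ≤ 4*N^4) (sq_nonneg x)]
  have hE0 : (0:ℝ) ≤ Real.exp (-(N^2*x)) := (Real.exp_pos _).le
  have hE0' : (0:ℝ) ≤ Real.exp (-(y/2*N)) := (Real.exp_pos _).le
  rw [norm_mul, norm_mul, norm_pow, Real.norm_eq_abs, Real.norm_eq_abs, Real.norm_eq_abs,
    abs_of_pos hN0, abs_of_nonneg hE0]
  calc N^2 * Real.exp (-(N^2*x)) * |(-4*N^4*x^2+15*N^2*x-15/2 : ℝ)|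
      ≤ N^2 * Real.exp (-(y/2*N)) * (27*N^4*(y+1)^2) := by
        apply mul_le_mul _ hP (abs_nonneg _) (by positivity)
        exact mul_le_mul_of_nonneg_left hE (by positivity)
    _ = 27*(y+1)^2 * (N^6 * Real.exp (-(y/2*N))) := by ring
    _ ≤ 30*(y+1)^2 * (N^8 * Real.exp (-(y/2*N))) := by
        have h68 : N^6 ≤ N^8 := pow_le_pow_right₀ hN (by norm_num)
        have := mul_le_mul_of_nonneg_right h68 hE0'
        nlinarith [mul_nonneg (mul_nonneg (by norm_num : (0:ℝ) ≤ 3) (sq_nonneg (y+1)))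
          (mul_nonneg (by positivity : (0:ℝ) ≤ N^8) hE0'), sq_nonneg (y+1),
          mul_le_mul_of_nonneg_left this (by positivity : (0:ℝ) ≤ 27*(y+1)^2)]

lemma bound2 (y x N : ℝ) (hy : 0 < y) (hN : 1 ≤ N) (hx1 : y/2 ≤ x) (hx2 : x ≤ y + 1) :
    ‖N^4 * Real.exp (-(N^2*x)) * (4*N^4*x^2-23*N^2*x+45/2)‖
      ≤ 50*(y+1)^2 * (N^8 * Real.exp (-(y/2 * N))) := by
  have hx0 : 0 < x := lt_of_lt_of_le (half_pos hy) hx1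
  have hN0 : (0:ℝ) < N := lt_of_lt_of_le one_pos hN
  have hN2 : (1:ℝ) ≤ N^2 := one_le_pow₀ hN
  have hN4 : (1:ℝ) ≤ N^4 := one_le_pow₀ hN
  have hE : Real.exp (-(N^2*x)) ≤ Real.exp (-(y/2 * N)) := by
    apply Real.exp_le_exp.2
    nlinarith [mul_nonneg (mul_nonneg (sub_nonneg.2 hN) hN0.le) hy.le,
      mul_nonneg (mul_nonneg hN0.le hN0.le) (sub_nonneg.2 hx1)]
  have hyy : (1:ℝ) ≤ (y+1)^2 := by nlinarith
  have hxx : x^2 ≤ (y+1)^2 := by nlinarith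
  have hQ : |(4*N^4*x^2-23*N^2*x+45/2 : ℝ)| ≤ 50*N^4*(y+1)^2 := by
    rw [abs_le]
    constructor
    · have hB : y + 1 ≤ (y+1)^2 := by nlinarith
      have hN24 : N^2 ≤ N^4 := pow_le_pow_right₀ hN (by norm_num)
      nlinarith [mul_le_mul_of_nonneg_left hx2 (by positivity : (0:ℝ) ≤ N^2),
        mul_le_mul_of_nonneg_left hB (by positivity : (0:ℝ) ≤ N^2),
        mul_le_mul_of_nonneg_right hN24 (sq_nonneg (y+1)),
        mul_nonneg (by positivity : (0:ℝ) ≤ 4*N^4) (sq_nonneg x)]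
    · have hone : (1:ℝ) ≤ N^4*(y+1)^2 := by nlinarith
      nlinarith [mul_le_mul_of_nonneg_left hxx (by positivity : (0:ℝ) ≤ 4*N^4),
        mul_nonneg (mul_nonneg (by norm_num : (0:ℝ) ≤ 23) (le_trans zero_le_one hN2)) hx0.le]
  have hE0 : (0:ℝ) ≤ Real.exp (-(N^2*x)) := (Real.exp_pos _).le
  rw [norm_mul, norm_mul, norm_pow, Real.norm_eq_abs, Real.norm_eq_abs, Real.norm_eq_abs,
    abs_of_pos hN0, abs_of_nonneg hE0]
  calc N^4 * Real.exp (-(N^2*x)) * |(4*N^4*x^2-23*N^2*x+45/2 : ℝ)|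
      ≤ N^4 * Real.exp (-(y/2*N)) * (50*N^4*(y+1)^2) := by
        apply mul_le_mul _ hQ (abs_nonneg _) (by positivity)
        exact mul_le_mul_of_nonneg_left hE (by positivity)
    _ = 50*(y+1)^2 * (N^8 * Real.exp (-(y/2*N))) := by ring
lemma part1 (A A' : ℝ → ℝ)
    (hA : ∀ y : ℝ, A y = ∑' n : ℕ+, (n : ℝ) ^ 2 * Real.exp (-((n : ℝ) ^ 2 * y))
        * (-4 * (n : ℝ) ^ 4 * y ^ 2 + 15 * (n : ℝ) ^ 2 * y - 15 / 2))
    (hA' : ∀ y : ℝ, A' y = ∑' n : ℕ+, (n : ℝ) ^ 4 * Real.exp (-((n : ℝ) ^ 2 * y))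
        * (4 * (n : ℝ) ^ 4 * y ^ 2 - 23 * (n : ℝ) ^ 2 * y + 45 / 2)) :
    ∀ y : ℝ, 0 < y → HasDerivAt A (A' y) y := by
  intro y hy
  have hAfun : A = fun z => ∑' n : ℕ+, (n : ℝ) ^ 2 * Real.exp (-((n : ℝ) ^ 2 * z))
      * (-4 * (n : ℝ) ^ 4 * z ^ 2 + 15 * (n : ℝ) ^ 2 * z - 15 / 2) := funext hA
  rw [hAfun, hA' y]
  have hy2 : 0 < y/2 := half_pos hy
  have hmem : y ∈ Set.Ioo (y/2) (y+1) := ⟨half_lt_self hy, lt_add_one y⟩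
  apply hasDerivAt_tsum_of_isPreconnected
    (u := fun n : ℕ+ => 50*(y+1)^2 * ((n:ℝ)^8 * Real.exp (-(y/2 * n))))
    (((summable_pnat_aux (y/2) hy2).mul_left _))
    isOpen_Ioo isPreconnected_Ioo
    (fun n x _ => by
      have h := hterm n x
      convert h using 2 <;> ring)
    (fun n x hx => by
      have h := bound2 y x (n:ℝ) hy (pnat_one_le n) hx.1.le hx.2.le
      convert h using 3 <;> ring)
    hmem
    ?_ hmem
  · apply Summable.of_norm_bounded
      (g := fun n : ℕ+ => 30*(y+1)^2 * ((n:ℝ)^8 * Real.exp (-(y/2 * n))))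
      ((summable_pnat_aux (y/2) hy2).mul_left _)
    intro n
    have h := bound1 y y (n:ℝ) hy (pnat_one_le n) (by linarith) (by linarith)
    convert h using 3 <;> ring


lemma part2aux (y : ℝ) (hy : y ∈ Set.Icc π (3.16:ℝ))
    (hsum : Summable (fun n : ℕ+ => (n : ℝ) ^ 4 * Real.exp (-((n : ℝ) ^ 2 * y))
        * (4 * (n : ℝ) ^ 4 * y ^ 2 - 23 * (n : ℝ) ^ 2 * y + 45 / 2))) :
    (∑' n : ℕ+, (n : ℝ) ^ 4 * Real.exp (-((n : ℝ) ^ 2 * y))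
        * (4 * (n : ℝ) ^ 4 * y ^ 2 - 23 * (n : ℝ) ^ 2 * y + 45 / 2)) < 0 := by
  obtain ⟨hyl, hyr⟩ := hy
  have hpil : (3.141592:ℝ) ≤ y := le_trans Real.pi_gt_d6.le hyl
  have hy3 : (3:ℝ) ≤ y := by linarith
  have hy0 : (0:ℝ) < y := by linarith
  obtain ⟨G, hG⟩ : ∃ G : ℕ → ℝ, ∀ k, G k = (fun n : ℕ+ => (n : ℝ) ^ 4
      * Real.exp (-((n : ℝ) ^ 2 * y))
      * (4 * (n : ℝ) ^ 4 * y ^ 2 - 23 * (n : ℝ) ^ 2 * y + 45 / 2)) (Nat.succPNat k) :=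
    ⟨_, fun _ => rfl⟩
  have hre : (∑' n : ℕ+, (n : ℝ) ^ 4 * Real.exp (-((n : ℝ) ^ 2 * y))
      * (4 * (n : ℝ) ^ 4 * y ^ 2 - 23 * (n : ℝ) ^ 2 * y + 45 / 2)) = ∑' k : ℕ, G k := by
    rw [← Equiv.tsum_eq Equiv.pnatEquivNat.symm]
    exact tsum_congr fun k => (hG k).symm
  have hGsum : Summable G := by
    have hGfun : G = fun k => (fun n : ℕ+ => (n : ℝ) ^ 4 * Real.exp (-((n : ℝ) ^ 2 * y))
        * (4 * (n : ℝ) ^ 4 * y ^ 2 - 23 * (n : ℝ) ^ 2 * y + 45 / 2)) (Nat.succPNat k) :=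
      funext hG
    rw [hGfun]
    exact (Equiv.pnatEquivNat.symm.summable_iff).2 hsum
  have hsplit : (∑' k : ℕ, G k) = G 0 + ∑' k : ℕ, G (k+1) := Summable.tsum_eq_zero_add hGsum
  -- head term
  have hG0 : G 0 = Real.exp (-y) * (4*y^2 - 23*y + 45/2) := by
    rw [hG 0]
    have hc0 : ((Nat.succPNat 0 : ℕ+) : ℕ) = 1 := rfl
    simp only [hc0]
    norm_num
  have hQneg : 4*y^2 - 23*y + 45/2 ≤ -10 := by
    nlinarith [mul_nonneg (sub_nonneg.2 hpil) (sub_nonneg.2 hyr)]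
  have hexpy : Real.exp (-(3.16:ℝ)) ≤ Real.exp (-y) := Real.exp_le_exp.2 (by linarith)
  have hhead : G 0 ≤ -10 * Real.exp (-(3.16:ℝ)) := by
    rw [hG0]
    nlinarith [Real.exp_pos (-y), mul_le_mul_of_nonneg_left hQneg (Real.exp_pos (-y)).le]
  -- tail terms
  have htail_term : ∀ k : ℕ, G (k+1)
      ≤ (4*(3.16:ℝ)^2*256*Real.exp (-12)) * (256*Real.exp (-6))^k := by
    intro k
    have hGk : G (k+1) = ((k:ℝ)+2)^4 * Real.exp (-(((k:ℝ)+2)^2*y))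
        * (4*((k:ℝ)+2)^4*y^2 - 23*((k:ℝ)+2)^2*y + 45/2) := by
      rw [hG (k+1)]
      have hc : ((Nat.succPNat (k+1) : ℕ+) : ℕ) = k + 2 := rfl
      simp only [hc]
      push_cast
      ring_nf
    rw [hGk]
    exact tailterm y k hy3 hyr hy0
  -- geometric series
  have ha := exp_neg6_lt
  have ha0 := Real.exp_pos (-6:ℝ)
  have hb := exp_neg12_lt
  have hb0 := Real.exp_pos (-12:ℝ)
  have hc := exp_neg316_gt
  have hr0 : (0:ℝ) ≤ 256*Real.exp (-6) := by positivity
  have hr1 : 256*Real.exp (-6) < 1 := by linarith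
  have hgeo : Summable (fun k:ℕ => (4*(3.16:ℝ)^2*256*Real.exp (-12)) * (256*Real.exp (-6))^k) :=
    (summable_geometric_of_lt_one hr0 hr1).mul_left _
  have htailsum : Summable (fun k:ℕ => G (k+1)) := (summable_nat_add_iff 1).2 hGsum
  have htail : (∑' k:ℕ, G (k+1))
      ≤ (4*(3.16:ℝ)^2*256*Real.exp (-12)) * (1 - 256*Real.exp (-6))⁻¹ := by
    calc (∑' k:ℕ, G (k+1))
        ≤ ∑' k:ℕ, (4*(3.16:ℝ)^2*256*Real.exp (-12)) * (256*Real.exp (-6))^k :=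
          Summable.tsum_le_tsum htail_term htailsum hgeo
      _ = _ := by rw [tsum_mul_left, tsum_geometric_of_lt_one hr0 hr1]
  have hinvle : (1 - 256*Real.exp (-6))⁻¹ ≤ 403/147 := by
    calc (1 - 256*Real.exp (-6))⁻¹ ≤ ((147:ℝ)/403)⁻¹ :=
          inv_anti₀ (by norm_num) (by linarith)
      _ = 403/147 := by norm_num
  have hC0 : (0:ℝ) ≤ 4*(3.16:ℝ)^2*256*Real.exp (-12) := by positivity
  have hCinv : (4*(3.16:ℝ)^2*256*Real.exp (-12)) * (1 - 256*Real.exp (-6))⁻¹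
      ≤ (4*(3.16:ℝ)^2*256*Real.exp (-12)) * (403/147) :=
    mul_le_mul_of_nonneg_left hinvle hC0
  rw [hre, hsplit]
  linarith [hhead, htail, hCinv, hb, hc]

/-- The derivative of `A(y) = Σ_{n=1}^∞ n² e^{−n²y}(−4n⁴y² + 15n²y − 15/2)` is
`A'(y) = Σ_{n=1}^∞ n⁴ e^{−n²y}(4n⁴y² − 23n²y + 45/2)` for `y > 0`, and
`A'(y) < 0` for all `y ∈ [π, 3.16]`. -/
theorem A_deriv (A A' : ℝ → ℝ)
    (hA : ∀ y : ℝ, A y = ∑' n : ℕ+, (n : ℝ) ^ 2 * Real.exp (-((n : ℝ) ^ 2 * y))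
        * (-4 * (n : ℝ) ^ 4 * y ^ 2 + 15 * (n : ℝ) ^ 2 * y - 15 / 2))
    (hA' : ∀ y : ℝ, A' y = ∑' n : ℕ+, (n : ℝ) ^ 4 * Real.exp (-((n : ℝ) ^ 2 * y))
        * (4 * (n : ℝ) ^ 4 * y ^ 2 - 23 * (n : ℝ) ^ 2 * y + 45 / 2)) :
    (∀ y : ℝ, 0 < y → HasDerivAt A (A' y) y) ∧
      (∀ y ∈ Set.Icc π (3.16 : ℝ), A' y < 0) := by
  constructor
  · exact part1 A A' hA hA'
  · intro y hy
    have hy0 : (0:ℝ) < y := lt_of_lt_of_le Real.pi_pos hy.1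
    have hy2 : (0:ℝ) < y/2 := half_pos hy0
    have hsum : Summable (fun n : ℕ+ => (n : ℝ) ^ 4 * Real.exp (-((n : ℝ) ^ 2 * y))
        * (4 * (n : ℝ) ^ 4 * y ^ 2 - 23 * (n : ℝ) ^ 2 * y + 45 / 2)) := by
      apply Summable.of_norm_bounded
        (g := fun n : ℕ+ => 50*(y+1)^2 * ((n:ℝ)^8 * Real.exp (-(y/2 * n))))
        ((summable_pnat_aux (y/2) hy2).mul_left _)
      intro n
      have h := bound2 y y (n:ℝ) hy0 (pnat_one_le n) (by linarith) (by linarith)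
      convert h using 3 <;> ring
    rw [hA' y]
    exact part2aux y hy hsum
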